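/- arXiv:2205.09095 — 9 statements merged into one kernel-verified Lean document; each statement's English description precedes it below -/
import Mathlib

section
/- Let γ > 0, B > 0, m < M be real numbers, and let (θ_t)_{t≥1} be a real sequence satisfying θ_{t+1} = θ_t + γ(l_t − r) where l_t ∈ [−B, B] are arbitrary real numbers, r ∈ [−B, B], and θ_1 ∈ [m − 2γB, M + 2γB]. Assume that whenever θ_t > M we have l_t < r, and whenever θ_t < m we have l_t > r. Then for all t ≥ 1, θ_t ∈ [m − 2γB, M + 2γB]. -/
/-- Boundedness lemma for the Rolling RC update rule. Indices start at 0,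
with `θ 0` playing the role of `θ₁`. -/
theorem rolling_rc_theta_bounded
    (γ B m M r : ℝ) (θ l : ℕ → ℝ)
    (hγ : 0 < γ) (hB : 0 < B) (hmM : m < M)
    (hupd : ∀ t, θ (t + 1) = θ t + γ * (l t - r))
    (hl : ∀ t, l t ∈ Set.Icc (-B) B)
    (hr : r ∈ Set.Icc (-B) B)
    (hinit : θ 0 ∈ Set.Icc (m - 2 * γ * B) (M + 2 * γ * B))
    (hhigh : ∀ t, θ t > M → l t < r)
    (hlow : ∀ t, θ t < m → l t > r) :
    ∀ t, θ t ∈ Set.Icc (m - 2 * γ * B) (M + 2 * γ * B) := by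
  intro t
  induction t with
  | zero => exact hinit
  | succ t ih =>
    obtain ⟨ih1, ih2⟩ := ih
    obtain ⟨hl1, hl2⟩ := hl t
    obtain ⟨hr1, hr2⟩ := hr
    have hstep : |γ * (l t - r)| ≤ 2 * γ * B := by
      rw [abs_mul, abs_of_pos hγ]
      have : |l t - r| ≤ 2 * B := by
        rw [abs_le]; constructor <;> nlinarith
      nlinarith
    rw [abs_le] at hstep
    rw [hupd t]
    constructor
    · by_cases h : θ t < m
      · have := hlow t h
        nlinarith
      · push_neg at h; nlinarith [hstep.1]
    · by_cases h : θ t > M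
      · have := hhigh t h
        nlinarith
      · push_neg at h; nlinarith [hstep.2]
end

section
/- Let γ > 0 and m' ≤ M' be real numbers, and let (θ_t)_{t≥1} be a real sequence with θ_{t+1} = θ_t + γ(l_t − r) for real numbers l_t and r. If θ_t ∈ [m', M'] for all t ≥ 1, then for every T ≥ 1, |(1/T) Σ_{t=1}^T (l_t − r)| ≤ max{θ_1 − m', M' − θ_1} / (T γ). Consequently, (1/T) Σ_{t=1}^T l_t → r as T → ∞. -/
open Filter

/-- Core risk-control result: bounded calibration parameter implies the
average loss converges to the nominal level `r`, with a `1/T` bound.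
Indices start at 0, with `θ 0` playing the role of `θ₁` and the sum
`∑ t in Finset.range T, l t` playing the role of `∑_{t=1}^T l_t`. -/
theorem rolling_rc_risk_control
    (γ m' M' r : ℝ) (θ l : ℕ → ℝ)
    (hγ : 0 < γ) (hm'M' : m' ≤ M')
    (hupd : ∀ t, θ (t + 1) = θ t + γ * (l t - r))
    (hbdd : ∀ t, θ t ∈ Set.Icc m' M') :
    (∀ T : ℕ, 1 ≤ T →
      |(1 / (T : ℝ)) * ∑ t ∈ Finset.range T, (l t - r)| ≤
        max (θ 0 - m') (M' - θ 0) / ((T : ℝ) * γ)) ∧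
    Tendsto (fun T : ℕ => (1 / (T : ℝ)) * ∑ t ∈ Finset.range T, l t)
      atTop (nhds r) := by
  set C := max (θ 0 - m') (M' - θ 0) with hC
  have hθsum : ∀ T, θ T = θ 0 + γ * ∑ t ∈ Finset.range T, (l t - r) := by
    intro T
    induction T with
    | zero => simp
    | succ n ih =>
      rw [hupd n, ih, Finset.sum_range_succ]
      ring
  have hsumbd : ∀ T, |∑ t ∈ Finset.range T, (l t - r)| ≤ C / γ := by
    intro T
    have h1 := hbdd T
    have h0 := hbdd 0
    have hsum : ∑ t ∈ Finset.range T, (l t - r) = (θ T - θ 0) / γ := by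
      rw [hθsum T]; field_simp; ring
    rw [hsum, abs_div, abs_of_pos hγ]
    gcongr
    rw [abs_sub_le_iff]
    constructor
    · calc θ T - θ 0 ≤ M' - θ 0 := by linarith [h1.2]
      _ ≤ C := le_max_right _ _
    · calc θ 0 - θ T ≤ θ 0 - m' := by linarith [h1.1]
      _ ≤ C := le_max_left _ _
  have hbound : ∀ T : ℕ, 1 ≤ T →
      |(1 / (T : ℝ)) * ∑ t ∈ Finset.range T, (l t - r)| ≤ C / ((T : ℝ) * γ) := by
    intro T hT
    have hTpos : (0:ℝ) < T := by exact_mod_cast hT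
    rw [abs_mul, abs_of_pos (by positivity : (0:ℝ) < 1 / T)]
    calc 1 / (T:ℝ) * |∑ t ∈ Finset.range T, (l t - r)| ≤ 1 / (T:ℝ) * (C / γ) := by
          exact mul_le_mul_of_nonneg_left (hsumbd T) (by positivity)
      _ = C / ((T:ℝ) * γ) := by
          field_simp
  refine ⟨hbound, ?_⟩
  have hg0 : Tendsto (fun T : ℕ => C / γ * (1 / (T : ℝ))) atTop (nhds 0) := by
    simpa using tendsto_one_div_atTop_nhds_zero_nat.const_mul (C / γ)
  have hg : Tendsto (fun T : ℕ => (1 / (T : ℝ)) * ∑ t ∈ Finset.range T, (l t - r))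
      atTop (nhds 0) := by
    apply squeeze_zero_norm' _ hg0
    filter_upwards [eventually_ge_atTop 1] with T hT
    calc ‖(1 / (T : ℝ)) * ∑ t ∈ Finset.range T, (l t - r)‖ ≤ C / ((T : ℝ) * γ) :=
          hbound T hT
      _ = C / γ * (1 / (T : ℝ)) := by
          rw [mul_comm (T:ℝ) γ, ← div_div, div_eq_mul_one_div]
  have := hg.add (tendsto_const_nhds : Tendsto (fun _ : ℕ => r) atTop (nhds r))
  rw [zero_add] at this
  apply this.congr'
  filter_upwards [eventually_ge_atTop 1] with T hT
  have hTpos : (0:ℝ) < T := by exact_mod_cast hT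
  rw [Finset.sum_sub_distrib, Finset.sum_const, Finset.card_range]
  field_simp
  ring
end

section
/- Let γ > 0, B > 0, m < M, and suppose (θ_t)_{t≥1} satisfies θ_{t+1} = θ_t + γ(l_t − r) with l_t, r ∈ [−B, B], θ_1 ∈ [m − 2γB, M + 2γB], and the property that θ_t > M implies l_t < r and θ_t < m implies l_t > r. Then for every T ≥ 1, |(1/T) Σ_{t=1}^T l_t − r| ≤ C/T where C = (M − m + 4γB)/γ. -/
/-- Combined finite-sample bound for Rolling RC: the empirical average loss
is within `C/T` of the nominal risk level, where `C = (M - m + 4γB)/γ`.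
Indices start at 0, with `θ 0` playing the role of `θ₁`. -/
theorem rolling_rc_finite_sample_bound
    (γ B m M r : ℝ) (θ l : ℕ → ℝ)
    (hγ : 0 < γ) (hB : 0 < B) (hmM : m < M)
    (hupd : ∀ t, θ (t + 1) = θ t + γ * (l t - r))
    (hl : ∀ t, l t ∈ Set.Icc (-B) B)
    (hr : r ∈ Set.Icc (-B) B)
    (hinit : θ 0 ∈ Set.Icc (m - 2 * γ * B) (M + 2 * γ * B))
    (hhigh : ∀ t, θ t > M → l t < r)
    (hlow : ∀ t, θ t < m → l t > r) :
    ∀ T : ℕ, 1 ≤ T →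
      |(1 / (T : ℝ)) * ∑ t ∈ Finset.range T, l t - r| ≤
        ((M - m + 4 * γ * B) / γ) / (T : ℝ) := by
  -- boundedness of θ t
  have hbound : ∀ t, θ t ∈ Set.Icc (m - 2 * γ * B) (M + 2 * γ * B) := by
    intro t
    induction t with
    | zero => exact hinit
    | succ n ih =>
      obtain ⟨ih1, ih2⟩ := ih
      obtain ⟨hl1, hl2⟩ := hl n
      obtain ⟨hr1, hr2⟩ := hr
      constructor
      · rcases lt_or_ge (θ n) m with h | h
        · have := hlow n h
          rw [hupd n]
          nlinarith
        · rw [hupd n]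
          nlinarith
      · rcases lt_or_ge M (θ n) with h | h
        · have := hhigh n h
          rw [hupd n]
          nlinarith
        · rw [hupd n]
          nlinarith
  -- telescoping
  have htel : ∀ T : ℕ, θ T - θ 0 = γ * ∑ t ∈ Finset.range T, (l t - r) := by
    intro T
    induction T with
    | zero => simp
    | succ n ih =>
      rw [Finset.sum_range_succ, hupd n, mul_add]
      linarith
  intro T hT
  have hTpos : (0 : ℝ) < T := by exact_mod_cast hT
  have hsum : |∑ t ∈ Finset.range T, l t - T * r| ≤ (M - m + 4 * γ * B) / γ := by
    have h1 : ∑ t ∈ Finset.range T, (l t - r) = ∑ t ∈ Finset.range T, l t - T * r := by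
      rw [Finset.sum_sub_distrib]
      simp [mul_comm]
    have h2 : ∑ t ∈ Finset.range T, l t - T * r = (θ T - θ 0) / γ := by
      rw [htel T, ← h1]
      field_simp
    rw [h2, abs_div, abs_of_pos hγ, div_le_div_iff_of_pos_right hγ]
    obtain ⟨h01, h02⟩ := hbound 0
    obtain ⟨hT1, hT2⟩ := hbound T
    rw [abs_le]
    constructor <;> nlinarith
  have : |(1 / (T : ℝ)) * ∑ t ∈ Finset.range T, l t - r|
      = |∑ t ∈ Finset.range T, l t - T * r| / T := by
    have key : (1 / (T : ℝ)) * ∑ t ∈ Finset.range T, l t - r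
        = (∑ t ∈ Finset.range T, l t - T * r) / T := by
      field_simp
    rw [key, abs_div, abs_of_pos hTpos]
  rw [this]
  exact div_le_div_of_nonneg_right hsum hTpos.le
end

section
/- Fix k ≥ 1, and for each i ∈ {1,…,k} let γ^i > 0, B > 0, M ∈ ℝ, and let (θ^i_t)_{t≥1} be real sequences with θ^i_{t+1} = θ^i_t + γ^i (l^i_t − r^i), where l^i_t, r^i ∈ [−B, B]. Assume θ^i_1 ≤ M + 2γ^i B for all i, and assume that whenever θ^i_t > M for some i, then l^j_t < r^j for all j ∈ {1,…,k}. Then for each i, θ^i_t ≤ M + 2γ^i B for all t, and for every T ≥ 1, (1/T) Σ_{t=1}^T l^i_t ≤ r^i + (M + 2γ^i B − θ^i_1)/(T γ^i). In particular, limsup_{T→∞} (1/T) Σ_{t=1}^T l^i_t ≤ r^i for every i. -/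
open Filter

/-- Multiple risk control (Theorem 2): with coordinatewise updates, all
long-run risks are asymptotically bounded by the nominal levels.
Indices start at 0, with `θ i 0` playing the role of `θ^i₁`. -/
theorem rolling_rc_multiple_risks
    (k : ℕ) (hk : 1 ≤ k)
    (γ r : Fin k → ℝ) (B M : ℝ)
    (θ l : Fin k → ℕ → ℝ)
    (hγ : ∀ i, 0 < γ i) (hB : 0 < B)
    (hupd : ∀ i t, θ i (t + 1) = θ i t + γ i * (l i t - r i))
    (hl : ∀ i t, l i t ∈ Set.Icc (-B) B)
    (hr : ∀ i, r i ∈ Set.Icc (-B) B)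
    (hinit : ∀ i, θ i 0 ≤ M + 2 * γ i * B)
    (hhigh : ∀ t, (∃ i, θ i t > M) → ∀ j, l j t < r j) :
    (∀ i t, θ i t ≤ M + 2 * γ i * B) ∧
    (∀ i, ∀ T : ℕ, 1 ≤ T →
      (1 / (T : ℝ)) * ∑ t ∈ Finset.range T, l i t ≤
        r i + (M + 2 * γ i * B - θ i 0) / ((T : ℝ) * γ i)) ∧
    (∀ i, limsup (fun T : ℕ => (1 / (T : ℝ)) * ∑ t ∈ Finset.range T, l i t)
        atTop ≤ r i) := by
  -- Part 1: boundedness of θ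
  have hbound : ∀ i t, θ i t ≤ M + 2 * γ i * B := by
    intro i t
    induction t with
    | zero => exact hinit i
    | succ t ih =>
      rw [hupd i t]
      by_cases h : θ i t > M
      · have hlt : l i t < r i := hhigh t ⟨i, h⟩ i
        have : γ i * (l i t - r i) ≤ 0 := by
          apply mul_nonpos_of_nonneg_of_nonpos (le_of_lt (hγ i))
          linarith
        linarith
      · push_neg at h
        have h1 : l i t ≤ B := (hl i t).2
        have h2 : -B ≤ r i := (hr i).1
        have : γ i * (l i t - r i) ≤ γ i * (2 * B) := by
          apply mul_le_mul_of_nonneg_left _ (le_of_lt (hγ i))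
          linarith
        nlinarith
  -- Telescoping
  have htel : ∀ i T, θ i T = θ i 0 + γ i * ∑ t ∈ Finset.range T, (l i t - r i) := by
    intro i T
    induction T with
    | zero => simp
    | succ T ih =>
      rw [hupd i T, ih, Finset.sum_range_succ]
      ring
  -- Part 2: average bound
  have havg : ∀ i, ∀ T : ℕ, 1 ≤ T →
      (1 / (T : ℝ)) * ∑ t ∈ Finset.range T, l i t ≤
        r i + (M + 2 * γ i * B - θ i 0) / ((T : ℝ) * γ i) := by
    intro i T hT
    have hTpos : (0 : ℝ) < T := by exact_mod_cast hT
    have hγi := hγ i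
    have hsum : γ i * ∑ t ∈ Finset.range T, (l i t - r i) ≤ M + 2 * γ i * B - θ i 0 := by
      have := hbound i T
      rw [htel i T] at this
      linarith
    have hsum' : ∑ t ∈ Finset.range T, (l i t - r i) ≤ (M + 2 * γ i * B - θ i 0) / γ i := by
      rw [le_div_iff₀ hγi]
      linarith [hsum]
    rw [Finset.sum_sub_distrib, Finset.sum_const, Finset.card_range, nsmul_eq_mul] at hsum'
    have hS : ∑ t ∈ Finset.range T, l i t ≤ (T : ℝ) * r i + (M + 2 * γ i * B - θ i 0) / γ i := by
      linarith
    have h2 : (1 / (T : ℝ)) * ∑ t ∈ Finset.range T, l i t ≤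
        (1 / (T : ℝ)) * ((T : ℝ) * r i + (M + 2 * γ i * B - θ i 0) / γ i) := by
      apply mul_le_mul_of_nonneg_left hS (by positivity)
    have heq : (1 / (T : ℝ)) * ((T : ℝ) * r i + (M + 2 * γ i * B - θ i 0) / γ i)
        = r i + (M + 2 * γ i * B - θ i 0) / ((T : ℝ) * γ i) := by
      field_simp
    rw [heq] at h2
    exact h2
  refine ⟨hbound, havg, ?_⟩
  -- Part 3: limsup
  intro i
  set C := M + 2 * γ i * B - θ i 0 with hC
  have hCnn : 0 ≤ C := by have := hinit i; linarith
  have hγi := hγ i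
  have hg : Tendsto (fun T : ℕ => r i + C / ((T : ℝ) * γ i)) atTop (nhds (r i)) := by
    have hdiv : Tendsto (fun T : ℕ => ((T : ℝ) * γ i)) atTop atTop :=
      (tendsto_natCast_atTop_atTop).atTop_mul_const hγi
    have h1 : Tendsto (fun T : ℕ => C / ((T : ℝ) * γ i)) atTop (nhds 0) :=
      Tendsto.div_atTop tendsto_const_nhds hdiv
    simpa using (tendsto_const_nhds.add h1)
  have hle : ∀ᶠ T : ℕ in atTop, (1 / (T : ℝ)) * ∑ t ∈ Finset.range T, l i t ≤
      r i + C / ((T : ℝ) * γ i) := by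
    filter_upwards [eventually_ge_atTop 1] with T hT
    exact havg i T hT
  have hlow : IsBoundedUnder (· ≥ ·) atTop
      (fun T : ℕ => (1 / (T : ℝ)) * ∑ t ∈ Finset.range T, l i t) := by
    refine ⟨-B, ?_⟩
    simp only [eventually_map]
    filter_upwards [eventually_ge_atTop 1] with T hT
    have hTpos : (0 : ℝ) < T := by exact_mod_cast hT
    have hS : (T : ℝ) * (-B) ≤ ∑ t ∈ Finset.range T, l i t := by
      calc (T : ℝ) * (-B) = ∑ t ∈ Finset.range T, (-B) := by simp [mul_comm]
        _ ≤ ∑ t ∈ Finset.range T, l i t := Finset.sum_le_sum fun t _ => (hl i t).1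
    rw [one_div, ← div_eq_inv_mul, ge_iff_le, le_div_iff₀ hTpos]
    linarith
  calc limsup (fun T : ℕ => (1 / (T : ℝ)) * ∑ t ∈ Finset.range T, l i t) atTop
      ≤ limsup (fun T : ℕ => r i + C / ((T : ℝ) * γ i)) atTop :=
        limsup_le_limsup hle hlow.isCoboundedUnder_le hg.isBoundedUnder_le
    _ = r i := hg.limsup_eq
end

section
/- Fix k ≥ 1, and for each i ∈ {1,…,k} let γ^i > 0, B > 0, m < M real numbers, and (θ^i_t)_{t≥1} sequences with θ^i_{t+1} = θ^i_t + γ^i (l^i_t − r^i), l^i_t, r^i ∈ [−B, B], and θ^i_1 ∈ [m − 2γ^i B, M + 2γ^i B]. Assume: if θ^i_t > M for some i then l^j_t < r^j for all j, and if θ^i_t < m for some i then l^j_t > r^j for all j. Then θ^i_t ∈ [m − 2γ^i B, M + 2γ^i B] for all t and i, and for every i, lim_{T→∞} (1/T) Σ_{t=1}^T l^i_t = r^i. -/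
open Filter

/-- Exact multiple risk control (Theorem 3): with two-sided boundary
conditions, every long-run empirical risk converges exactly to its
nominal level. Indices start at 0, with `θ i 0` playing the role of `θ^i₁`. -/
theorem rolling_rc_exact_multiple_risks
    (k : ℕ) (hk : 1 ≤ k)
    (γ r : Fin k → ℝ) (B m M : ℝ)
    (θ l : Fin k → ℕ → ℝ)
    (hγ : ∀ i, 0 < γ i) (hB : 0 < B) (hmM : m < M)
    (hupd : ∀ i t, θ i (t + 1) = θ i t + γ i * (l i t - r i))
    (hl : ∀ i t, l i t ∈ Set.Icc (-B) B)
    (hr : ∀ i, r i ∈ Set.Icc (-B) B)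
    (hinit : ∀ i, θ i 0 ∈ Set.Icc (m - 2 * γ i * B) (M + 2 * γ i * B))
    (hhigh : ∀ t, (∃ i, θ i t > M) → ∀ j, l j t < r j)
    (hlow : ∀ t, (∃ i, θ i t < m) → ∀ j, l j t > r j) :
    (∀ i t, θ i t ∈ Set.Icc (m - 2 * γ i * B) (M + 2 * γ i * B)) ∧
    (∀ i, Tendsto (fun T : ℕ => (1 / (T : ℝ)) * ∑ t ∈ Finset.range T, l i t)
        atTop (nhds (r i))) := by
  have hbound : ∀ t i, θ i t ∈ Set.Icc (m - 2 * γ i * B) (M + 2 * γ i * B) := by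
    intro t
    induction t with
    | zero => exact fun i => hinit i
    | succ t ih =>
      intro i
      obtain ⟨hL, hR⟩ := ih i
      obtain ⟨hl1, hl2⟩ := hl i t
      obtain ⟨hr1, hr2⟩ := hr i
      have hdiff : l i t - r i ≤ 2 * B := by linarith
      have hdiff' : -(2 * B) ≤ l i t - r i := by linarith
      constructor
      · by_cases h : θ i t < m
        · have := hlow t ⟨i, h⟩ i
          have : θ i (t + 1) ≥ θ i t := by
            rw [hupd]
            nlinarith [hγ i]
          linarith
        · push_neg at h
          rw [hupd]
          nlinarith [(hγ i).le]
      · by_cases h : θ i t > M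
        · have := hhigh t ⟨i, h⟩ i
          have : θ i (t + 1) ≤ θ i t := by
            rw [hupd]
            nlinarith [hγ i]
          linarith
        · push_neg at h
          rw [hupd]
          nlinarith [(hγ i).le]
  refine ⟨fun i t => hbound t i, fun i => ?_⟩
  have htel : ∀ T : ℕ, θ i T = θ i 0 + γ i * ∑ t ∈ Finset.range T, (l i t - r i) := by
    intro T
    induction T with
    | zero => simp
    | succ T ih =>
      rw [Finset.sum_range_succ, hupd, ih]; ring
  have hsum : ∀ T : ℕ, ∑ t ∈ Finset.range T, l i t
      = (θ i T - θ i 0) / γ i + T * r i := by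
    intro T
    have hγi := (hγ i).ne'
    have := htel T
    have h2 : ∑ t ∈ Finset.range T, (l i t - r i)
        = (∑ t ∈ Finset.range T, l i t) - T * r i := by
      rw [Finset.sum_sub_distrib]
      simp [mul_comm]
    have h3 : ∑ t ∈ Finset.range T, (l i t - r i) = (θ i T - θ i 0) / γ i := by
      rw [this]; field_simp; ring
    rw [← h3, h2]; ring
  set C := (M - m + 4 * γ i * B) / γ i with hC
  have hC0 : 0 ≤ C := by
    have := (hγ i).le
    apply div_nonneg _ this
    nlinarith [hγ i, hB]
  have key : ∀ T : ℕ, 1 ≤ T →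
      |(1 / (T : ℝ)) * ∑ t ∈ Finset.range T, l i t - r i| ≤ C * (1 / T) := by
    intro T hT
    have hT0 : (0 : ℝ) < T := by exact_mod_cast hT
    rw [hsum T]
    have heq : (1 / (T : ℝ)) * ((θ i T - θ i 0) / γ i + T * r i) - r i
        = ((θ i T - θ i 0) / γ i) * (1 / T) := by
      field_simp; ring
    rw [heq, abs_mul, abs_of_pos (by positivity : (0:ℝ) < 1 / T)]
    apply mul_le_mul_of_nonneg_right _ (by positivity)
    rw [abs_div, abs_of_pos (hγ i), hC]
    rw [div_le_div_iff_of_pos_right (hγ i)]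
    obtain ⟨h1, h2⟩ := hbound T i
    obtain ⟨h3, h4⟩ := hbound 0 i
    rw [abs_le]
    constructor <;> nlinarith
  have h0 : Tendsto (fun T : ℕ => C * (1 / (T : ℝ))) atTop (nhds 0) := by
    have := tendsto_one_div_atTop_nhds_zero_nat (𝕜 := ℝ)
    simpa using this.const_mul C
  have : Tendsto (fun T : ℕ => (1 / (T : ℝ)) * ∑ t ∈ Finset.range T, l i t - r i)
      atTop (nhds 0) := by
    apply squeeze_zero_norm' _ h0
    filter_upwards [eventually_ge_atTop 1] with T hT
    exact key T hT
  have := this.add_const (r i)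
  simpa using this
end

section
/- Let 0 < α < 1 and B ≥ 1/(1−α) be given. In the setting of Rolling RC with the truncated miscoverage-counter loss l_t = min{MC_t, B} ∈ [0, B], target level r = α/(1−α), step size γ > 0, and update θ_{t+1} = θ_t + γ(l_t − r), suppose the θ-sequence remains in a bounded interval [m', M']. Then limsup_{T→∞} (1/T) Σ_{t=1}^T 1{Y_t ∉ Ĉ_t(X_t)} ≤ α/(1−α), i.e., controlling the truncated MC risk at level α/(1−α) controls the long-run miscoverage rate at level α/(1−α). -/
open Filter

/-- Controlling the truncated miscoverage-counter risk at level `α/(1-α)`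
controls the long-run miscoverage rate at level `α/(1-α)`.
`e t ∈ {0,1}` is the miscoverage indicator at time `t ≥ 1`. -/
theorem truncated_mc_risk_controls_miscoverage
    (α B γ m' M' : ℝ)
    (hα0 : 0 < α) (hα1 : α < 1) (hB : 1 / (1 - α) ≤ B) (hγ : 0 < γ)
    (e MC l θ : ℕ → ℝ)
    (he : ∀ t, 1 ≤ t → e t ∈ ({0, 1} : Set ℝ))
    (hMC0 : MC 0 = 0)
    (hMC : ∀ t, 1 ≤ t → MC t = if e t = 1 then MC (t - 1) + 1 else 0)
    (hl : ∀ t, 1 ≤ t → l t = min (MC t) B)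
    (hupd : ∀ t, 1 ≤ t → θ (t + 1) = θ t + γ * (l t - α / (1 - α)))
    (hbdd : ∀ t, 1 ≤ t → θ t ∈ Set.Icc m' M') :
    limsup (fun T : ℕ => (1 / (T : ℝ)) * ∑ t ∈ Finset.Icc 1 T, e t) atTop ≤
      α / (1 - α) := by
  set r : ℝ := α / (1 - α) with hr
  have h1α : (0:ℝ) < 1 - α := by linarith
  have hB1 : (1:ℝ) ≤ B := le_trans (by rw [le_div_iff₀ h1α]; nlinarith) hB
  have hrnn : 0 ≤ r := div_nonneg hα0.le h1α.le
  have hMCnn : ∀ t, 0 ≤ MC t := by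
    intro t
    induction t with
    | zero => simp [hMC0]
    | succ n ih =>
      rw [hMC (n+1) (by omega)]
      split
      · simp only [Nat.add_sub_cancel]; linarith
      · exact le_refl 0
  have hel : ∀ t, 1 ≤ t → e t ≤ l t := by
    intro t ht
    rw [hl t ht]
    rcases he t ht with h0 | h1
    · rw [h0]
      exact le_min (hMCnn t) (by linarith)
    · rw [Set.mem_singleton_iff] at h1
      rw [h1]
      have : MC t = MC (t-1) + 1 := by rw [hMC t ht, if_pos h1]
      exact le_min (by have := hMCnn (t-1); linarith) hB1
  have henn : ∀ t, 1 ≤ t → 0 ≤ e t := by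
    intro t ht
    rcases he t ht with h0 | h1
    · rw [h0]
    · rw [Set.mem_singleton_iff] at h1; rw [h1]; norm_num
  have htel : ∀ T : ℕ, θ (T + 1) = θ 1 + γ * ∑ t ∈ Finset.Icc 1 T, (l t - r) := by
    intro T
    induction T with
    | zero => simp
    | succ n ih =>
      rw [Finset.sum_Icc_succ_top (by omega), hupd (n+1) (by omega), ih]
      ring
  have hsum : ∀ T : ℕ, ∑ t ∈ Finset.Icc 1 T, e t ≤ (M' - m') / γ + T * r := by
    intro T
    have h1 : ∑ t ∈ Finset.Icc 1 T, e t ≤ ∑ t ∈ Finset.Icc 1 T, l t := by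
      apply Finset.sum_le_sum
      intro i hi
      exact hel i (Finset.mem_Icc.mp hi).1
    have h2 : ∑ t ∈ Finset.Icc 1 T, (l t - r) = (θ (T+1) - θ 1) / γ := by
      rw [htel T]; field_simp; ring
    have h3 : ∑ t ∈ Finset.Icc 1 T, (l t - r)
        = (∑ t ∈ Finset.Icc 1 T, l t) - T * r := by
      rw [Finset.sum_sub_distrib, Finset.sum_const, Nat.card_Icc]
      simp [nsmul_eq_mul]
    have hθT := hbdd (T+1) (by omega)
    have hθ1 := hbdd 1 (by omega)
    have h4 : (θ (T+1) - θ 1) / γ ≤ (M' - m') / γ := by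
      gcongr
      · exact hθT.2
      · exact hθ1.1
    have : (∑ t ∈ Finset.Icc 1 T, l t) - T * r ≤ (M' - m') / γ := by
      rw [← h3, h2]; exact h4
    linarith
  -- the dominating sequence
  set g : ℕ → ℝ := fun T => (1 / (T : ℝ)) * ((M' - m') / γ) + r with hg
  have hle : ∀ᶠ T : ℕ in atTop, (1 / (T : ℝ)) * ∑ t ∈ Finset.Icc 1 T, e t ≤ g T := by
    filter_upwards [eventually_ge_atTop 1] with T hT
    have hTpos : (0:ℝ) < T := by exact_mod_cast hT
    have := hsum T
    have h5 : (1 / (T : ℝ)) * ∑ t ∈ Finset.Icc 1 T, e t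
        ≤ (1 / (T : ℝ)) * ((M' - m') / γ + T * r) := by
      apply mul_le_mul_of_nonneg_left this (by positivity)
    calc (1 / (T : ℝ)) * ∑ t ∈ Finset.Icc 1 T, e t
        ≤ (1 / (T : ℝ)) * ((M' - m') / γ + T * r) := h5
      _ = g T := by
          rw [hg, mul_add]
          congr 1
          field_simp
  have hgt : Tendsto g atTop (nhds r) := by
    have h0 : Tendsto (fun T : ℕ => (1 / (T : ℝ)) * ((M' - m') / γ)) atTop (nhds 0) := by
      simpa using (tendsto_one_div_atTop_nhds_zero_nat.mul_const ((M' - m') / γ))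
    have := h0.add (tendsto_const_nhds (x := r) (f := atTop))
    rw [zero_add] at this
    exact this
  have hgl : limsup g atTop = r := hgt.limsup_eq
  calc limsup (fun T : ℕ => (1 / (T : ℝ)) * ∑ t ∈ Finset.Icc 1 T, e t) atTop
      ≤ limsup g atTop := by
        refine limsup_le_limsup hle ?_ ?_
        · apply Filter.IsCoboundedUnder.of_frequently_ge (a := 0)
          apply Filter.Eventually.frequently
          filter_upwards [eventually_ge_atTop 1] with T hT
          apply mul_nonneg (by positivity)
          exact Finset.sum_nonneg fun i hi => henn i (Finset.mem_Icc.mp hi).1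
        · exact hgt.isBoundedUnder_le
    _ = r := hgl
end

section
/- Let γ > 0 and let (θ_t)_{t≥1} satisfy θ_{t+1} = θ_t + γ(l_t − r) with l_t ∈ {0, 1} (the binary miscoverage loss) and r ∈ (0, 1). If θ_t ∈ [m', M'] for all t, then the empirical coverage rate satisfies |(1/T) Σ_{t=1}^T (1 − l_t) − (1 − r)| ≤ (M' − m')/(T γ) for all T ≥ 1, so the long-run coverage rate converges to exactly 1 − r. -/
open Filter

/-- Specialization of Theorem 1 to the binary miscoverage loss: the
empirical coverage rate converges exactly to `1 - r` (the ACI guarantee).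
Indices start at 0, with `θ 0` playing the role of `θ₁`. -/
theorem rolling_rc_aci_coverage
    (γ m' M' r : ℝ) (θ l : ℕ → ℝ)
    (hγ : 0 < γ)
    (hl : ∀ t, l t ∈ ({0, 1} : Set ℝ))
    (hr : r ∈ Set.Ioo (0 : ℝ) 1)
    (hupd : ∀ t, θ (t + 1) = θ t + γ * (l t - r))
    (hbdd : ∀ t, θ t ∈ Set.Icc m' M') :
    (∀ T : ℕ, 1 ≤ T →
      |(1 / (T : ℝ)) * ∑ t ∈ Finset.range T, (1 - l t) - (1 - r)| ≤
        (M' - m') / ((T : ℝ) * γ)) ∧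
    Tendsto (fun T : ℕ => (1 / (T : ℝ)) * ∑ t ∈ Finset.range T, (1 - l t))
      atTop (nhds (1 - r)) := by
  have htel : ∀ T : ℕ, θ T = θ 0 + γ * ∑ t ∈ Finset.range T, (l t - r) := by
    intro T
    induction T with
    | zero => simp
    | succ n ih =>
      rw [Finset.sum_range_succ, hupd n, ih]; ring
  have hbound : ∀ T : ℕ, 1 ≤ T →
      |(1 / (T : ℝ)) * ∑ t ∈ Finset.range T, (1 - l t) - (1 - r)| ≤
        (M' - m') / ((T : ℝ) * γ) := by
    intro T hT
    have hTpos : (0 : ℝ) < T := by exact_mod_cast hT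
    have hsum : ∑ t ∈ Finset.range T, (l t - r) = (θ T - θ 0) / γ := by
      rw [eq_div_iff hγ.ne']
      linear_combination -htel T
    have hkey : (1 / (T : ℝ)) * ∑ t ∈ Finset.range T, (1 - l t) - (1 - r)
        = -((θ T - θ 0) / ((T : ℝ) * γ)) := by
      have h1 : ∑ t ∈ Finset.range T, (1 - l t)
          = T * (1 - r) - ∑ t ∈ Finset.range T, (l t - r) := by
        rw [Finset.sum_sub_distrib, Finset.sum_sub_distrib]
        simp [mul_comm]
        ring
      rw [h1, hsum]
      field_simp
      ring
    rw [hkey, abs_neg, abs_div]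
    have hden : |(T : ℝ) * γ| = (T : ℝ) * γ := abs_of_pos (by positivity)
    rw [hden]
    apply div_le_div_of_nonneg_right ?_ (by positivity) |>.trans_eq rfl
    · have h1 := hbdd T
      have h2 := hbdd 0
      rw [abs_le]
      constructor <;> [skip; skip] <;>
        simp only [Set.mem_Icc] at h1 h2 <;> nlinarith [h1.1, h1.2, h2.1, h2.2]
  refine ⟨hbound, ?_⟩
  have h0 : Tendsto (fun T : ℕ => (M' - m') / ((T : ℝ) * γ)) atTop (nhds 0) := by
    have : Tendsto (fun T : ℕ => (T : ℝ) * γ) atTop atTop :=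
      (tendsto_natCast_atTop_atTop).atTop_mul_const hγ
    simpa using Tendsto.const_div_atTop this (M' - m')
  rw [← sub_zero (1 - r)] at *
  have : Tendsto (fun T : ℕ =>
      (1 / (T : ℝ)) * ∑ t ∈ Finset.range T, (1 - l t) - (1 - r)) atTop (nhds 0) := by
    apply squeeze_zero_norm' ?_ h0
    filter_upwards [eventually_ge_atTop 1] with T hT
    simpa [Real.norm_eq_abs] using hbound T hT
  simpa using this.add_const (1 - r)
end

section
/- Let B > 0, γ > 0, m < M, and consider two coupled recursions θ_{t+1} = θ_t + γ(l_t − r) where the losses l_t ∈ [−B,B] may depend arbitrarily (adversarially) on the entire history (θ_1, …, θ_t), subject only to: l_t < r whenever θ_t > M and l_t > r whenever θ_t < m. Then for any such adversarial choice and any initial θ_1 ∈ [m − 2γB, M + 2γB], the empirical risk satisfies sup over all adversarial loss sequences of |(1/T) Σ_{t=1}^T l_t − r| ≤ (M − m + 4γB)/(γT) for every T ≥ 1. -/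
/-- Worst-case (adversarial) Rolling RC guarantee: the finite-sample risk
bound holds uniformly over every loss sequence satisfying the boundary
conditions (in particular, losses may depend arbitrarily on the history).
Indices start at 0, with `θ 0` playing the role of `θ₁`. -/
theorem rolling_rc_adversarial_bound
    (B γ m M r : ℝ)
    (hB : 0 < B) (hγ : 0 < γ) (hmM : m < M) (hr : r ∈ Set.Icc (-B) B) :
    ∀ θ l : ℕ → ℝ,
      (∀ t, θ (t + 1) = θ t + γ * (l t - r)) →
      (∀ t, l t ∈ Set.Icc (-B) B) →
      (∀ t, θ t > M → l t < r) →
      (∀ t, θ t < m → l t > r) →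
      θ 0 ∈ Set.Icc (m - 2 * γ * B) (M + 2 * γ * B) →
      ∀ T : ℕ, 1 ≤ T →
        |(1 / (T : ℝ)) * ∑ t ∈ Finset.range T, l t - r| ≤
          (M - m + 4 * γ * B) / (γ * (T : ℝ)) := by
  intro θ l hrec hl hup hdown h0 T hT
  -- step size bound: |γ*(l t - r)| ≤ 2γB
  have hstep : ∀ t, |γ * (l t - r)| ≤ 2 * γ * B := by
    intro t
    have h1 := (hl t).1; have h2 := (hl t).2
    have hr1 := hr.1; have hr2 := hr.2
    rw [abs_mul, abs_of_pos hγ]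
    have : |l t - r| ≤ 2 * B := by
      rw [abs_le]; constructor <;> nlinarith
    nlinarith
  -- invariant
  have hinv : ∀ t, θ t ∈ Set.Icc (m - 2 * γ * B) (M + 2 * γ * B) := by
    intro t
    induction t with
    | zero => exact h0
    | succ n ih =>
      obtain ⟨ih1, ih2⟩ := ih
      have hs := hstep n
      rw [abs_le] at hs
      constructor
      · by_cases hcase : θ n < m
        · have := hdown n hcase
          rw [hrec n]
          have : 0 ≤ γ * (l n - r) := by nlinarith
          linarith
        · push_neg at hcase
          rw [hrec n]; linarith [hs.1]
      · by_cases hcase : θ n > M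
        · have := hup n hcase
          rw [hrec n]
          have : γ * (l n - r) ≤ 0 := by nlinarith
          linarith
        · push_neg at hcase
          rw [hrec n]; linarith [hs.2]
  -- telescoping
  have htel : ∀ T : ℕ, θ T = θ 0 + γ * ∑ t ∈ Finset.range T, (l t - r) := by
    intro T
    induction T with
    | zero => simp
    | succ n ih =>
      rw [Finset.sum_range_succ, hrec n, ih]; ring
  have hTpos : (0:ℝ) < T := by exact_mod_cast hT
  have key : (1 / (T : ℝ)) * ∑ t ∈ Finset.range T, l t - r
      = (θ T - θ 0) / (γ * T) := by
    rw [htel T]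
    rw [Finset.sum_sub_distrib, Finset.sum_const, Finset.card_range]
    field_simp
    ring
  rw [key, abs_div]
  have hden : |γ * (T:ℝ)| = γ * T := abs_of_pos (by positivity)
  rw [hden]
  have hnum : |θ T - θ 0| ≤ M - m + 4 * γ * B := by
    obtain ⟨a1, a2⟩ := hinv T
    obtain ⟨b1, b2⟩ := hinv 0
    rw [abs_le]; constructor <;> linarith
  gcongr
end

section
/- Let k ≥ 1 and suppose for each i ∈ {1,…,k} the sequence θ^i_t satisfies the hypotheses of the exact multiple-risk-control theorem (update θ^i_{t+1} = θ^i_t + γ^i(l^i_t − r^i), losses bounded in [−B,B], θ^i_t ∈ [m − 2γ^i B, M + 2γ^i B] for all t). Then for every i and every T ≥ 1, |(1/T) Σ_{t=1}^T l^i_t − r^i| ≤ max{θ^i_1 − m + 2γ^i B, M + 2γ^i B − θ^i_1}/(T γ^i). -/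
/-- Finite-sample version of the exact multiple-risk-control theorem: each
of the `k` empirical risks deviates from its nominal level by `O(1/T)`.
Indices start at 0, with `θ i 0` playing the role of `θ^i₁`. -/
theorem rolling_rc_multi_finite_sample
    (k : ℕ) (hk : 1 ≤ k)
    (γ r : Fin k → ℝ) (B m M : ℝ)
    (θ l : Fin k → ℕ → ℝ)
    (hγ : ∀ i, 0 < γ i) (hB : 0 < B)
    (hupd : ∀ i t, θ i (t + 1) = θ i t + γ i * (l i t - r i))
    (hl : ∀ i t, l i t ∈ Set.Icc (-B) B)
    (hbdd : ∀ i t, θ i t ∈ Set.Icc (m - 2 * γ i * B) (M + 2 * γ i * B)) :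
    ∀ i, ∀ T : ℕ, 1 ≤ T →
      |(1 / (T : ℝ)) * ∑ t ∈ Finset.range T, l i t - r i| ≤
        max (θ i 0 - m + 2 * γ i * B) (M + 2 * γ i * B - θ i 0) /
          ((T : ℝ) * γ i) := by
  intro i T hT
  have htel : ∀ n : ℕ, θ i n = θ i 0 + γ i * ∑ t ∈ Finset.range n, (l i t - r i) := by
    intro n
    induction n with
    | zero => simp
    | succ n ih =>
      rw [Finset.sum_range_succ, hupd i n, ih]; ring
  have hTpos : (0 : ℝ) < T := by exact_mod_cast hT
  have hγi := hγ i
  have key : (1 / (T : ℝ)) * ∑ t ∈ Finset.range T, l i t - r i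
      = (θ i T - θ i 0) / ((T : ℝ) * γ i) := by
    have h := htel T
    have hsum : ∑ t ∈ Finset.range T, (l i t - r i)
        = (∑ t ∈ Finset.range T, l i t) - T * r i := by
      rw [Finset.sum_sub_distrib]; simp [mul_comm]
    rw [hsum] at h
    field_simp
    nlinarith [h]
  rw [key, abs_div, abs_of_pos (show (0:ℝ) < (T:ℝ) * γ i by positivity)]
  gcongr
  have h0 := hbdd i 0
  have hTb := hbdd i T
  simp only [Set.mem_Icc] at h0 hTb
  rw [abs_le]
  constructor
  · have : -(max (θ i 0 - m + 2 * γ i * B) (M + 2 * γ i * B - θ i 0))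
        ≤ -(θ i 0 - m + 2 * γ i * B) := by
      exact neg_le_neg (le_max_left _ _)
    nlinarith [hTb.1]
  · calc θ i T - θ i 0 ≤ M + 2 * γ i * B - θ i 0 := by linarith [hTb.2]
    _ ≤ _ := le_max_right _ _
end
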